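/- Let H be a separable infinite-dimensional complex Hilbert space and T : H → H a bounded linear operator. Then T satisfies the hypothesis of the Hypercyclicity Criterion if and only if T is hereditarily hypercyclic with respect to some strictly increasing sequence (n_k) of positive integers. -/

import Mathlib

open Filter Topology Set

section Helpers

set_option linter.unusedSectionVars false

variable {H : Type*} [NormedAddCommGroup H] [InnerProductSpace ℂ H]

lemma hc_pow_apply_comm (T : H →L[ℂ] H) (a b : ℕ) (x : H) :
    (T ^ a) ((T ^ b) x) = (T ^ b) ((T ^ a) x) := by
  rw [← ContinuousLinearMap.mul_apply, ← pow_add, add_comm, pow_add,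
    ContinuousLinearMap.mul_apply]

lemma hc_tendsto_of_lt (a : ℕ → H) (L : H) (ha : ∀ j : ℕ, ‖a j - L‖ < 1/(j+1)) :
    Filter.Tendsto a Filter.atTop (nhds L) := by
  rw [tendsto_iff_norm_sub_tendsto_zero]
  apply squeeze_zero (fun j => norm_nonneg _) (fun j => (ha j).le)
  exact tendsto_one_div_add_atTop_nhds_zero_nat

lemma hc_birkhoff [CompleteSpace H] [TopologicalSpace.SeparableSpace H]
    (A : ℕ → H →L[ℂ] H)
    (h : ∀ U V : Set H, IsOpen U → IsOpen V → U.Nonempty → V.Nonempty →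
      ∃ m, ∃ u ∈ U, A m u ∈ V) :
    ∃ x : H, Dense (Set.range fun m => A m x) := by
  obtain ⟨b, hbc, hbne, hb⟩ := TopologicalSpace.exists_countable_basis H
  haveI := hbc.to_subtype
  have hGo : ∀ B : b, IsOpen (⋃ m, A m ⁻¹' (B : Set H)) := fun B =>
    isOpen_iUnion fun m => (hb.isOpen B.2).preimage (A m).continuous
  have hGd : ∀ B : b, Dense (⋃ m, A m ⁻¹' (B : Set H)) := by
    intro B
    rw [dense_iff_inter_open]
    intro U hU hUne
    obtain ⟨m, u, hu, hmu⟩ := h U B hU (hb.isOpen B.2) hUne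
      (nonempty_iff_ne_empty.2 fun he => hbne (he ▸ B.2))
    exact ⟨u, hu, mem_iUnion.2 ⟨m, hmu⟩⟩
  obtain ⟨x, hx⟩ := (dense_iInter_of_isOpen hGo hGd).nonempty
  refine ⟨x, hb.dense_iff.2 fun o ho hone => ?_⟩
  obtain ⟨m, hm⟩ := mem_iUnion.1 (mem_iInter.1 hx ⟨o, ho⟩)
  exact ⟨A m x, hm, ⟨m, rfl⟩⟩

lemma hc_birkhoff_io [CompleteSpace H] [TopologicalSpace.SeparableSpace H]
    (A : ℕ → H →L[ℂ] H)
    (h : ∀ U V : Set H, IsOpen U → IsOpen V → U.Nonempty → V.Nonempty →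
      ∀ N, ∃ m, N ≤ m ∧ ∃ u ∈ U, A m u ∈ V) :
    ∃ x : H, ∀ V : Set H, IsOpen V → V.Nonempty → ∀ N, ∃ m, N ≤ m ∧ A m x ∈ V := by
  obtain ⟨b, hbc, hbne, hb⟩ := TopologicalSpace.exists_countable_basis H
  haveI := hbc.to_subtype
  set G : b × ℕ → Set H := fun p => ⋃ (m) (_ : p.2 ≤ m), A m ⁻¹' (p.1 : Set H) with hG
  have hGo : ∀ p, IsOpen (G p) := fun p =>
    isOpen_iUnion fun m => isOpen_iUnion fun _ =>
      (hb.isOpen p.1.2).preimage (A m).continuous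
  have hGd : ∀ p, Dense (G p) := by
    intro p
    rw [dense_iff_inter_open]
    intro U hU hUne
    obtain ⟨m, hNm, u, hu, hmu⟩ := h U p.1 hU (hb.isOpen p.1.2) hUne
      (nonempty_iff_ne_empty.2 fun he => hbne (he ▸ p.1.2)) p.2
    exact ⟨u, hu, mem_iUnion.2 ⟨m, mem_iUnion.2 ⟨hNm, hmu⟩⟩⟩
  obtain ⟨x, hx⟩ := (dense_iInter_of_isOpen hGo hGd).nonempty
  refine ⟨x, fun V hV hVne N => ?_⟩
  obtain ⟨v, hv⟩ := hVne
  obtain ⟨o, hob, hvo, hoV⟩ := hb.exists_subset_of_mem_open hv hV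
  have hmem := mem_iInter.1 hx (⟨o, hob⟩, N)
  simp only [hG, mem_iUnion] at hmem
  obtain ⟨m, hNm, hm⟩ := hmem
  exact ⟨m, hNm, hoV hm⟩

end Helpers

/-- `T` satisfies the hypothesis of the Hypercyclicity Criterion. -/
def SatisfiesHypercyclicityCriterion
    {H : Type*} [NormedAddCommGroup H] [InnerProductSpace ℂ H]
    (T : H →L[ℂ] H) : Prop :=
  ∃ (Y Z : Set H) (n : ℕ → ℕ) (S : ℕ → H → H),
    Dense Y ∧ Dense Z ∧ StrictMono n ∧ (∀ k, 0 < n k) ∧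
    (∀ y ∈ Y, Filter.Tendsto (fun k => (T ^ n k) y) Filter.atTop (nhds 0)) ∧
    (∀ z ∈ Z, Filter.Tendsto (fun k => S k z) Filter.atTop (nhds 0) ∧
      Filter.Tendsto (fun k => (T ^ n k) (S k z)) Filter.atTop (nhds z))

/-- `T` is hereditarily hypercyclic with respect to the sequence `n`: for every
subsequence `(n (k m))_m`, the sequence of operators `(T ^ n (k m))_m` is
hypercyclic. -/
def HereditarilyHypercyclic
    {H : Type*} [NormedAddCommGroup H] [InnerProductSpace ℂ H]
    (T : H →L[ℂ] H) (n : ℕ → ℕ) : Prop :=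
  ∀ k : ℕ → ℕ, StrictMono k →
    ∃ x : H, Dense (Set.range fun m : ℕ => (T ^ n (k m)) x)

/-- the Hypercyclicity Criterion is equivalent to hereditary
hypercyclicity with respect to some strictly increasing sequence of positive
integers. -/
theorem criterion_iff_hereditarily_hypercyclic
    {H : Type*} [NormedAddCommGroup H] [InnerProductSpace ℂ H]
    [CompleteSpace H] [TopologicalSpace.SeparableSpace H]
    (hdim : ¬ FiniteDimensional ℂ H)
    (T : H →L[ℂ] H) :
    SatisfiesHypercyclicityCriterion T ↔
    ∃ n : ℕ → ℕ, StrictMono n ∧ (∀ k, 0 < n k) ∧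
      HereditarilyHypercyclic T n := by
  constructor
  · rintro ⟨Y, Z, n, S, hY, hZ, hmono, hpos, hTy, hz⟩
    refine ⟨n, hmono, hpos, fun k hk => ?_⟩
    apply hc_birkhoff
    intro U V hU hV hUne hVne
    obtain ⟨y, hyY, hyU⟩ := hY.exists_mem_open hU hUne
    obtain ⟨z, hzZ, hzV⟩ := hZ.exists_mem_open hV hVne
    have hkt : Tendsto k atTop atTop := hk.tendsto_atTop
    have hS : Tendsto (fun m => S (k m) z) atTop (nhds 0) := ((hz z hzZ).1).comp hkt
    have hTS : Tendsto (fun m => (T ^ n (k m)) (S (k m) z)) atTop (nhds z) :=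
      ((hz z hzZ).2).comp hkt
    have hTyk : Tendsto (fun m => (T ^ n (k m)) y) atTop (nhds 0) := (hTy y hyY).comp hkt
    have h1 : Tendsto (fun m => y + S (k m) z) atTop (nhds y) := by
      simpa using tendsto_const_nhds.add hS
    have h2 : Tendsto (fun m => (T ^ n (k m)) (y + S (k m) z)) atTop (nhds z) := by
      have := hTyk.add hTS
      simpa [map_add] using this
    obtain ⟨m, hm1, hm2⟩ :=
      ((h1.eventually (hU.mem_nhds hyU)).and (h2.eventually (hV.mem_nhds hzV))).exists
    exact ⟨m, y + S (k m) z, hm1, hm2⟩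
  · rintro ⟨n, hmono, hpos, hher⟩
    classical
    haveI : Nontrivial H := by
      by_contra hc
      rw [not_nontrivial_iff_subsingleton] at hc
      exact hdim inferInstance
    -- eventual transitivity
    have evt : ∀ U V : Set H, IsOpen U → IsOpen V → U.Nonempty → V.Nonempty →
        {m : ℕ | ¬ ∃ u ∈ U, (T ^ n m) u ∈ V}.Finite := by
      intro U V hU hV hUne hVne
      by_contra hinf
      set p : ℕ → Prop := fun m => ¬ ∃ u ∈ U, (T ^ n m) u ∈ V with hp
      have hinf' : (setOf p).Infinite := hinf
      obtain ⟨x, hx⟩ := hher (Nat.nth p) (Nat.nth_strictMono hinf')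
      have horb : Dense (Set.range fun q : ℕ => (T ^ q) x) := by
        apply Dense.mono ?_ hx
        rintro - ⟨m, rfl⟩
        exact ⟨n (Nat.nth p m), rfl⟩
      have hdr : DenseRange (⇑T) := by
        apply Dense.mono ?_ (horb.diff_singleton x)
        rintro y ⟨⟨q, rfl⟩, hy⟩
        simp only [mem_singleton_iff] at hy
        match q with
        | 0 => exact absurd (by simp) hy
        | q + 1 =>
          exact ⟨(T ^ q) x, by simp [pow_succ', ContinuousLinearMap.mul_apply]⟩
      have hdrq : ∀ q : ℕ, DenseRange (⇑(T ^ q)) := by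
        intro q
        induction q with
        | zero =>
          have : ⇑(T ^ 0) = id := by ext y; simp
          rw [this]; exact denseRange_id
        | succ q ih =>
          have : ⇑(T ^ (q + 1)) = ⇑T ∘ ⇑(T ^ q) := by
            ext y; rw [pow_succ', ContinuousLinearMap.mul_apply]; rfl
          rw [this]
          exact hdr.comp ih T.continuous
      obtain ⟨y, ⟨q, rfl⟩, hyU⟩ := horb.exists_mem_open hU hUne
      have hdq : Dense (Set.range fun m : ℕ => (T ^ n (Nat.nth p m)) ((T ^ q) x)) := by
        have himg : Dense (⇑(T ^ q) '' (Set.range fun m : ℕ => (T ^ n (Nat.nth p m)) x)) :=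
          (hdrq q).dense_image (T ^ q).continuous hx
        apply Dense.mono ?_ himg
        rintro - ⟨-, ⟨m, rfl⟩, rfl⟩
        exact ⟨m, hc_pow_apply_comm T (n (Nat.nth p m)) q x⟩
      obtain ⟨v, ⟨m, hm⟩, hvV⟩ := hdq.exists_mem_open hV hVne
      refine (Nat.nth_mem_of_infinite hinf' m) ⟨(T ^ q) x, hyU, ?_⟩
      have hm' : (T ^ n (Nat.nth p m)) ((T ^ q) x) = v := hm
      rw [hm']; exact hvV
    -- a vector visiting every open set infinitely often
    obtain ⟨x, hx⟩ := hc_birkhoff_io (fun m => T ^ n m) (by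
      intro U V hU hV hUne hVne N
      obtain ⟨M, hM⟩ := (evt U V hU hV hUne hVne).bddAbove
      refine ⟨max N (M + 1), le_max_left _ _, ?_⟩
      by_contra hcon
      have := hM hcon
      omega)
    have horb : Dense (Set.range fun q : ℕ => (T ^ q) x) := by
      rw [dense_iff_inter_open]
      intro U hU hUne
      obtain ⟨m, -, hm⟩ := hx U hU hUne 0
      exact ⟨(T ^ n m) x, hm, ⟨n m, rfl⟩⟩
    have key : ∀ j N : ℕ, ∃ m, N < m ∧ ‖(T ^ n m) x‖ < 1/(j+1) ∧
        ∃ w : H, ‖w‖ < 1/(j+1) ∧ ‖(T ^ n m) w - x‖ < 1/(j+1) := by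
      intro j N
      have hpos1 : (0:ℝ) < 1/(j+1) := by positivity
      obtain ⟨M, hM⟩ := (evt (Metric.ball (0:H) (1/(j+1))) (Metric.ball x (1/(j+1)))
        Metric.isOpen_ball Metric.isOpen_ball
        (Metric.nonempty_ball.2 hpos1) (Metric.nonempty_ball.2 hpos1)).bddAbove
      obtain ⟨m, hm1, hm2⟩ := hx (Metric.ball (0:H) (1/(j+1))) Metric.isOpen_ball
        (Metric.nonempty_ball.2 hpos1) (max (N + 1) (M + 1))
      refine ⟨m, by omega, by simpa [mem_ball_zero_iff] using hm2, ?_⟩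
      have hmC : ∃ u ∈ Metric.ball (0:H) (1/(j+1)), (T ^ n m) u ∈ Metric.ball x (1/(j+1)) := by
        by_contra hcon
        have := hM hcon
        omega
      obtain ⟨u, hu1, hu2⟩ := hmC
      exact ⟨u, by simpa [mem_ball_zero_iff] using hu1,
        by simpa [Metric.mem_ball, dist_eq_norm] using hu2⟩
    choose f hf1 hf2 g hg1 hg2 using key
    set k : ℕ → ℕ := fun j => Nat.rec (f 0 0) (fun i ih => f (i + 1) ih) j with hkdef
    set w : ℕ → H := fun j => Nat.rec (g 0 0) (fun i _ => g (i + 1) (k i)) j with hwdef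
    have hkmono : StrictMono k := strictMono_nat_of_lt_succ fun j => hf1 (j + 1) (k j)
    have hA : ∀ j, ‖(T ^ n (k j)) x‖ < 1/(j+1) := by
      intro j
      match j with
      | 0 => exact hf2 0 0
      | i + 1 => exact hf2 (i + 1) (k i)
    have hB : ∀ j, ‖w j‖ < 1/(j+1) ∧ ‖(T ^ n (k j)) (w j) - x‖ < 1/(j+1) := by
      intro j
      match j with
      | 0 => exact ⟨hg1 0 0, hg2 0 0⟩
      | i + 1 => exact ⟨hg1 (i + 1) (k i), hg2 (i + 1) (k i)⟩
    have hTx0 : Tendsto (fun j => (T ^ n (k j)) x) atTop (nhds 0) :=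
      hc_tendsto_of_lt _ _ (fun j => by rw [sub_zero]; exact hA j)
    have hw0 : Tendsto w atTop (nhds 0) :=
      hc_tendsto_of_lt _ _ (fun j => by rw [sub_zero]; exact (hB j).1)
    have hwx : Tendsto (fun j => (T ^ n (k j)) (w j)) atTop (nhds x) :=
      hc_tendsto_of_lt _ _ (fun j => (hB j).2)
    refine ⟨Set.range (fun q : ℕ => (T ^ q) x), Set.range (fun q : ℕ => (T ^ q) x),
      fun j => n (k j),
      fun j z => if h : ∃ q : ℕ, (T ^ q) x = z then (T ^ h.choose) (w j) else 0,
      horb, horb, hmono.comp hkmono, fun j => hpos _, ?_, ?_⟩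
    · rintro - ⟨q, rfl⟩
      have heq : (fun j => (T ^ n (k j)) ((T ^ q) x)) = fun j => (T ^ q) ((T ^ n (k j)) x) := by
        funext j; exact hc_pow_apply_comm T (n (k j)) q x
      rw [heq]
      have := ((T ^ q).continuous.tendsto 0).comp hTx0
      simpa [Function.comp_def] using this
    · rintro z ⟨q, hq⟩
      have hex : ∃ q : ℕ, (T ^ q) x = z := ⟨q, hq⟩
      have hrz : (T ^ hex.choose) x = z := hex.choose_spec
      constructor
      · simp only [dif_pos hex]
        have := ((T ^ hex.choose).continuous.tendsto 0).comp hw0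
        simpa [Function.comp_def] using this
      · simp only [dif_pos hex]
        have heq : (fun j => (T ^ n (k j)) ((T ^ hex.choose) (w j)))
            = fun j => (T ^ hex.choose) ((T ^ n (k j)) (w j)) := by
          funext j; exact hc_pow_apply_comm T (n (k j)) hex.choose (w j)
        rw [heq]
        have := ((T ^ hex.choose).continuous.tendsto x).comp hwx
        rw [hrz] at this
        exact this
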